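/- The Hopf algebra Y^(1) is cocommutative: F ∘ Δ = Δ, where F: Y^(1) ⊗ Y^(1) → Y^(1) ⊗ Y^(1) is the flip map F(P ⊗ Q) = Q ⊗ P. -/

import Mathlib

open scoped TensorProduct

noncomputable section

namespace FreeProb

attribute [local instance] Classical.propDecidable

/-! ### Non-crossing partitions of `{1,…,n}`, modelled as setoids on `Fin n` -/

/-- The partition `0_n` of `Fin n` into singletons. -/
def botS (n : ℕ) : Setoid (Fin n) := ⟨Eq, eq_equivalence⟩

/-- The partition `1_n` of `Fin n` with a single block. -/
def topS (n : ℕ) : Setoid (Fin n) :=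
  ⟨fun _ _ => True, ⟨fun _ => trivial, fun _ => trivial, fun _ _ => trivial⟩⟩

/-- A partition is non-crossing if there is no crossing `a < b < c < d` with
`a ∼ c`, `b ∼ d` lying in different blocks. -/
def IsNC {n : ℕ} (s : Setoid (Fin n)) : Prop :=
  ∀ a b c d : Fin n, a < b → b < c → c < d → s.r a c → s.r b d → s.r a b

/-- The lattice `NC(n)` of non-crossing partitions, ordered by reversed refinement
(the order inherited from the lattice of setoids). -/
abbrev NC (n : ℕ) := {s : Setoid (Fin n) // IsNC s}

instance (n : ℕ) : Finite (Setoid (Fin n)) :=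
  Finite.of_injective (fun s => s.r) (by intro s t h; cases s; cases t; cases h; rfl)

noncomputable instance (n : ℕ) : Fintype (Setoid (Fin n)) := Fintype.ofFinite _

noncomputable instance (n : ℕ) : Fintype (NC n) := Fintype.ofFinite _

/-- `0_n` as a non-crossing partition. -/
def ncBot (n : ℕ) : NC n :=
  ⟨botS n, by
    intro a b c d h1 h2 h3 hac _
    have hac' : a = c := hac
    subst hac'
    exact absurd (h1.trans h2) (lt_irrefl _)⟩

/-- `1_n` as a non-crossing partition. -/
def ncTop (n : ℕ) : NC n := ⟨topS n, fun _ _ _ _ _ _ _ _ _ => trivial⟩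

/-- The blocks of a partition, as a finset of finsets. -/
def blocks {n : ℕ} (s : Setoid (Fin n)) : Finset (Finset (Fin n)) :=
  Finset.univ.image fun a => Finset.univ.filter fun b => s.r a b

/-- The next element of the block of `b`, in increasing cyclic order. -/
def nextFun {n : ℕ} (s : Setoid (Fin n)) (b : Fin n) : Fin n :=
  let B : Finset (Fin n) := Finset.univ.filter fun a => s.r b a
  let A : Finset (Fin n) := B.filter fun a => b < a
  if h : A.Nonempty then A.min' h
  else B.min' ⟨b, Finset.mem_filter.mpr ⟨Finset.mem_univ b, s.iseqv.refl b⟩⟩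

/-- The permutation `P_π` associated to a partition `π`: its cycles are the blocks
of `π`, traversed in increasing order.  (The function `nextFun` is indeed bijective,
so the `dite` below always takes its first branch.) -/
def permOf {n : ℕ} (s : Setoid (Fin n)) : Equiv.Perm (Fin n) :=
  if h : Function.Bijective (nextFun s) then Equiv.ofBijective _ h else 1

/-- The partition of `Fin n` into the cycles (orbits) of a permutation. -/
def cycleSetoid {n : ℕ} (σ : Equiv.Perm (Fin n)) : Setoid (Fin n) :=
  ⟨σ.SameCycle, ⟨fun x => Equiv.Perm.SameCycle.refl σ x, fun h => h.symm, fun h h' => h.trans h'⟩⟩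

/-- The Kreweras complement `K(π)`, determined by `P_{K(π)} = P_π⁻¹ * P_{1_n}`. -/
def kreweras {n : ℕ} (s : Setoid (Fin n)) : Setoid (Fin n) :=
  cycleSetoid ((permOf s)⁻¹ * permOf (topS n))

/-- The relative Kreweras complement `K_t(s)`, determined by `P_{K_t(s)} = P_s⁻¹ * P_t`. -/
def relKreweras {n : ℕ} (s t : Setoid (Fin n)) : Setoid (Fin n) :=
  cycleSetoid ((permOf s)⁻¹ * permOf t)

/-! ### Words, and the Hopf algebra `Y^(k)` -/

/-- Words over the alphabet `{1,…,k}`, encoded as pairs `⟨n, w⟩` with `w : Fin n → Fin k`. -/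
abbrev WordIdx (k : ℕ) := Σ n : ℕ, Fin n → Fin k

/-- The commutative polynomial algebra `Y^(k) = ℂ[Y_w : |w| ≥ 2]`. -/
abbrev Yalg (k : ℕ) := MvPolynomial {p : WordIdx k // 2 ≤ p.1} ℂ

/-- The generator `Y_w`, with the convention `Y_w = 1` for `|w| ≤ 1`. -/
def Ygen {k : ℕ} (p : WordIdx k) : Yalg k :=
  if h : 2 ≤ p.1 then MvPolynomial.X ⟨p, h⟩ else 1

/-- The subword `w|B` of `w` on the positions in `B` (in increasing order). -/
def subword {k n : ℕ} (w : Fin n → Fin k) (B : Finset (Fin n)) : Fin B.card → Fin k :=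
  fun i => w (B.orderIsoOfFin rfl i).1

/-- The element `Y_{w;π} = ∏_{B block of π} Y_{w|B}`. -/
def Yprod {k n : ℕ} (w : Fin n → Fin k) (s : Setoid (Fin n)) : Yalg k :=
  ∏ B ∈ blocks s, Ygen ⟨B.card, subword w B⟩

/-- The comultiplication of `Y^(k)`:
`Δ(Y_w) = ∑_{π ∈ NC(n)} Y_{w;π} ⊗ Y_{w;K(π)}`. -/
def Δk (k : ℕ) : Yalg k →ₐ[ℂ] Yalg k ⊗[ℂ] Yalg k :=
  MvPolynomial.aeval fun q : {p : WordIdx k // 2 ≤ p.1} =>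
    ∑ π : NC q.1.1, Yprod q.1.2 π.1 ⊗ₜ[ℂ] Yprod q.1.2 (kreweras π.1)

/-- The counit of `Y^(k)`: `ε(Y_w) = 0` for `|w| ≥ 2`. -/
def εk (k : ℕ) : Yalg k →ₐ[ℂ] ℂ := MvPolynomial.aeval fun _ => 0

/-- The grading of `Y^(k)` in which `Y_w` is homogeneous of degree `|w| - 1`. -/
def Ycomp (k n : ℕ) : Submodule ℂ (Yalg k) :=
  MvPolynomial.weightedHomogeneousSubmodule ℂ (fun q : {p : WordIdx k // 2 ≤ p.1} => q.1.1 - 1) n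

/-! ### Convolution of linear functionals on a bialgebra -/

variable {A : Type} [CommRing A] [Algebra ℂ A]

/-- Convolution `ξη := mult ∘ (ξ ⊗ η) ∘ Δ` of two linear functionals. -/
def convF (D : A →ₐ[ℂ] A ⊗[ℂ] A) (ξ η : A →ₗ[ℂ] ℂ) : A →ₗ[ℂ] ℂ :=
  LinearMap.mul' ℂ ℂ ∘ₗ TensorProduct.map ξ η ∘ₗ D.toLinearMap

/-- Convolution powers `ξ^m`, with `ξ^0 := e` (the counit). -/
def convPowF (D : A →ₐ[ℂ] A ⊗[ℂ] A) (e ξ : A →ₗ[ℂ] ℂ) : ℕ → (A →ₗ[ℂ] ℂ)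
  | 0 => e
  | m + 1 => convF D (convPowF D e ξ m) ξ

/-- `(log η)(x) = -∑_{ℓ ≥ 1} (1/ℓ) (e - η)^ℓ (x)`, the logarithm of a functional `η`
with respect to convolution (`e` is the counit).  On each `x` the sum has only finitely
many nonzero terms, so the `tsum` below is the honest value. -/
def logFunF (D : A →ₐ[ℂ] A ⊗[ℂ] A) (e η : A →ₗ[ℂ] ℂ) (x : A) : ℂ :=
  -∑' ℓ : ℕ, (1 / ((ℓ : ℂ) + 1)) * convPowF D e (e - η) (ℓ + 1) x

/-! ### Distributions, R-transforms, free multiplicative convolution -/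

/-- A distribution (or a family of coefficients of a power series in `k` non-commuting
indeterminates), encoded by its values on all words. -/
abbrev Dist (k : ℕ) := WordIdx k → ℂ

/-- `μ ∈ G_k`: `μ(1) = 1` and `μ(X_i) = 1` for all `i`. -/
def InG {k : ℕ} (μ : Dist k) : Prop :=
  (∀ w : Fin 0 → Fin k, μ ⟨0, w⟩ = 1) ∧ (∀ w : Fin 1 → Fin k, μ ⟨1, w⟩ = 1)

/-- `Cf_{w;π}(f) = ∏_{B block of π} Cf_{w|B}(f)`, for a coefficient family `α`. -/
def cfPart {k n : ℕ} (α : Dist k) (w : Fin n → Fin k) (s : Setoid (Fin n)) : ℂ :=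
  ∏ B ∈ blocks s, α ⟨B.card, subword w B⟩

/-- `α` is (the coefficient family of) the R-transform of `μ`:
the moment–cumulant relations hold. -/
def IsRTransform {k : ℕ} (μ α : Dist k) : Prop :=
  (∀ w : Fin 0 → Fin k, α ⟨0, w⟩ = 0) ∧
  ∀ (n : ℕ) (w : Fin n → Fin k), 1 ≤ n → μ ⟨n, w⟩ = ∑ π : NC n, cfPart α w π.1

/-- `γ` is the R-transform of the free multiplicative convolution of distributions
with R-transforms `α` and `β`:
`Cf_w(R_{μ⊠ν}) = ∑_{π ∈ NC(n)} Cf_{w;π}(R_μ) Cf_{w;K(π)}(R_ν)`. -/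
def IsBoxtimes {k : ℕ} (α β γ : Dist k) : Prop :=
  ∀ (n : ℕ) (w : Fin n → Fin k), 1 ≤ n →
    γ ⟨n, w⟩ = ∑ π : NC n, cfPart α w π.1 * cfPart β w (kreweras π.1)

/-- The unit `μ_o` of `(G_k, ⊠)`: all moments equal to `1`. -/
def distUnit (k : ℕ) : Dist k := fun _ => 1

/-- The character `χ_μ` of `Y^(k)` associated to a distribution with R-transform `α`:
`χ_μ(Y_w) = Cf_w(R_μ)`. -/
def charOf {k : ℕ} (α : Dist k) : Yalg k →ₐ[ℂ] ℂ :=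
  MvPolynomial.aeval fun q => α q.1

/-- The generalized coefficient `Cf_w^(Γ)(f) = ∏_{j=1}^{ℓ} Cf_{w;K_{π_j}(π_{j-1})}(f)`
attached to a (multi-)chain `Γ = (π_0,…,π_{m+1})` in `NC(n)`. -/
def cfChain {k n : ℕ} (α : Dist k) (w : Fin n → Fin k) (m : ℕ)
    (c : Fin (m + 2) → Setoid (Fin n)) : ℂ :=
  ∏ j : Fin (m + 1), cfPart α w (relKreweras (c j.castSucc) (c j.succ))

/-- The `i`-th marginal coefficients: the free cumulants of the `i`-th marginal `μ_i`
are `Cf_{(i,…,i)}(R_μ)`. -/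
def margFam {k : ℕ} (α : Dist k) (i : Fin k) : Dist 1 := fun q => α ⟨q.1, fun _ => i⟩


/-! ### Iterated comultiplication -/

/-- The iterated tensor powers `Y^(k) ⊗ ⋯ ⊗ Y^(k)` (`m+1` factors), as objects of
`ModuleCat ℂ` so that the recursion carries its module structure. -/
def YpowM (k : ℕ) : ℕ → ModuleCat ℂ
  | 0 => ModuleCat.of ℂ (Yalg k)
  | m + 1 => ModuleCat.of ℂ (Yalg k ⊗[ℂ] YpowM k m)

/-- The iterated comultiplication: `Δiter k m = Δ^{m+1}` in the notation of the paper
(`Δiter k 0 = id`, `Δiter k (m+1) = (id ⊗ Δ^{m+1}) ∘ Δ`). -/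
def Δiter (k : ℕ) : ∀ m : ℕ, Yalg k →ₗ[ℂ] YpowM k m
  | 0 => LinearMap.id
  | m + 1 => TensorProduct.map LinearMap.id (Δiter k m) ∘ₗ (Δk k).toLinearMap

/-- The pure tensor `Y_{w;K_{π_1}(π_0)} ⊗ ⋯ ⊗ Y_{w;K_{π_{m+1}}(π_m)}` attached to a
multi-chain `(π_0, …, π_{m+1})`. -/
def chainTensor {k n : ℕ} (w : Fin n → Fin k) :
    ∀ m : ℕ, (Fin (m + 2) → Setoid (Fin n)) → YpowM k m
  | 0, c => Yprod w (relKreweras (c 0) (c 1))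
  | m + 1, c => Yprod w (relKreweras (c 0) (c 1)) ⊗ₜ[ℂ] chainTensor w m (fun i => c i.succ)


/-! ### One-variable power series tools -/

/-- The R-transform of a one-variable distribution, as a power series. -/
def Rser (α : Dist 1) : PowerSeries ℂ :=
  PowerSeries.mk fun m => if m = 0 then 0 else α ⟨m, fun _ => 0⟩

/-- Composition `f ∘ g` of formal power series (the honest composition whenever
`g` has vanishing constant term). -/
def psComp (f g : PowerSeries ℂ) : PowerSeries ℂ :=
  PowerSeries.mk fun m =>
    ∑ j ∈ Finset.range (m + 1), PowerSeries.coeff (R := ℂ) j f * PowerSeries.coeff (R := ℂ) m (g ^ j)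

/-- `S` is the S-transform of the distribution with R-transform `α`:
`S(z) = (1/z)·R^{⟨-1⟩}(z)`, i.e. `z·S(z)` is the compositional inverse of `R`. -/
def SChar (α : Dist 1) (S : PowerSeries ℂ) : Prop :=
  PowerSeries.constantCoeff (R := ℂ) S = 1 ∧
  psComp (Rser α) (PowerSeries.X * S) = PowerSeries.X ∧
  psComp (PowerSeries.X * S) (Rser α) = PowerSeries.X

/-- The formal logarithm `log f = -∑_{ℓ≥1} (1/ℓ)(1-f)^ℓ = ∑_{ℓ≥1} ((-1)^{ℓ+1}/ℓ)(f-1)^ℓ`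
of a power series (the honest logarithm whenever `f` has constant term 1). -/
def psLog {B : Type} [CommRing B] [Algebra ℂ B] (f : PowerSeries B) : PowerSeries B :=
  PowerSeries.mk fun m =>
    ∑ ℓ ∈ Finset.range (m + 1), ((-1 : ℂ) ^ (ℓ + 1) / ℓ) • PowerSeries.coeff (R := B) m ((f - 1) ^ ℓ)

/-- The coefficient-wise LS-transform of a one-variable distribution, as a power series. -/
def LSseries (α : Dist 1) : PowerSeries ℂ :=
  PowerSeries.mk fun n =>
    if 2 ≤ n then
      logFunF (Δk 1) (εk 1).toLinearMap (charOf α).toLinearMap (Ygen ⟨n, fun _ => 0⟩)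
    else 0

/-! ### The Hopf algebra `Sym` of symmetric functions -/

/-- `Sym`, realized as the free commutative algebra on the complete homogeneous
symmetric functions `h_1, h_2, …`. -/
abbrev SymA := MvPolynomial {m : ℕ // 1 ≤ m} ℂ

/-- The complete homogeneous symmetric function `h_m` (with `h_0 = 1`). -/
def Hgen (m : ℕ) : SymA := if h : 1 ≤ m then MvPolynomial.X ⟨m, h⟩ else 1

/-- The comultiplication of `Sym`: `Δ(h_n) = ∑_{i=0}^n h_i ⊗ h_{n-i}`. -/
def ΔSym : SymA →ₐ[ℂ] SymA ⊗[ℂ] SymA :=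
  MvPolynomial.aeval fun q : {m : ℕ // 1 ≤ m} =>
    ∑ i ∈ Finset.range (q.1 + 1), Hgen i ⊗ₜ[ℂ] Hgen (q.1 - i)

/-- The counit of `Sym`. -/
def εSym : SymA →ₐ[ℂ] ℂ := MvPolynomial.aeval fun _ => 0

/-- The generating series `h(z) = 1 + ∑ (-1)^n h_n z^n`. -/
def hSymSeries : PowerSeries SymA :=
  PowerSeries.mk fun m => if m = 0 then 1 else (-1 : SymA) ^ m * Hgen m

/-- The generating series `e(z) = 1 + ∑ e_n z^n = 1/h(z)`. -/
def eSymSeries : PowerSeries SymA := PowerSeries.invOfUnit hSymSeries 1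

/-- The elementary symmetric function `e_m`, defined through `e(z) = 1/h(z)`. -/
def eSym (m : ℕ) : SymA := PowerSeries.coeff (R := SymA) m eSymSeries

/-- The power sum symmetric function `p_m`, defined through
`log e(z) = ∑_{m≥1} ((-1)^{m+1}/m) p_m z^m`. -/
def pSym (m : ℕ) : SymA :=
  ((-1 : ℂ) ^ (m + 1) * m) • PowerSeries.coeff (R := SymA) m (psLog eSymSeries)

/-- The grading of `Sym` (`h_n` homogeneous of degree `n`). -/
def SymComp (n : ℕ) : Submodule ℂ SymA :=
  MvPolynomial.weightedHomogeneousSubmodule ℂ (fun q : {m : ℕ // 1 ≤ m} => q.1) n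

/-- The symmetric function `y_n = ∑_{π ∈ NC(n-1)} ∏_{B block of π} e_{|B|}`. -/
def ySym (n : ℕ) : SymA := ∑ π : NC (n - 1), ∏ B ∈ blocks π.1, eSym B.card

/-- The homomorphism `Φ : Y^(1) → Sym`, `Φ(Y_n) = y_n`. -/
def Phi : Yalg 1 →ₐ[ℂ] SymA := MvPolynomial.aeval fun q => ySym q.1.1

/-- The character `θ_μ` of `Sym` attached to a distribution with S-transform `S`:
`θ_μ(h_n) = (-1)^n β_n` where `S(z) = 1 + ∑ β_n z^n`. -/
def thetaOf (S : PowerSeries ℂ) : SymA →ₐ[ℂ] ℂ :=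
  MvPolynomial.aeval fun q : {m : ℕ // 1 ≤ m} =>
    (-1 : ℂ) ^ q.1 * PowerSeries.coeff (R := ℂ) q.1 S

/-- Infinitesimal characters of `Sym`. -/
def IsInfCharSym (ξ : SymA →ₗ[ℂ] ℂ) : Prop :=
  ∀ u v : SymA, ξ (u * v) = ξ u * εSym v + εSym u * ξ v

/-! ### Auxiliary development for cocommutativity -/

section Aux

open Finset

variable {n : ℕ}

/-- The block of `x` in `s`, as a finset. -/
def blk (s : Setoid (Fin n)) (x : Fin n) : Finset (Fin n) :=
  Finset.univ.filter fun b => s.r x b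

lemma mem_blk {s : Setoid (Fin n)} {x y : Fin n} : y ∈ blk s x ↔ s.r x y := by
  simp [blk]

lemma blk_self (s : Setoid (Fin n)) (x : Fin n) : x ∈ blk s x := mem_blk.2 (s.refl' x)

lemma blk_eq_of_r {s : Setoid (Fin n)} {x y : Fin n} (h : s.r x y) : blk s x = blk s y := by
  ext z
  simp only [mem_blk]
  exact ⟨fun h' => s.trans' (s.symm' h) h', fun h' => s.trans' h h'⟩

lemma blocks_eq_image (s : Setoid (Fin n)) : blocks s = Finset.univ.image (blk s) := rfl

lemma blk_mem_blocks (s : Setoid (Fin n)) (x : Fin n) : blk s x ∈ blocks s := by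
  rw [blocks_eq_image]; exact Finset.mem_image_of_mem _ (Finset.mem_univ x)

lemma mem_blocks {s : Setoid (Fin n)} {C : Finset (Fin n)} :
    C ∈ blocks s ↔ ∃ x, C = blk s x := by
  rw [blocks_eq_image]
  constructor
  · rintro hC
    obtain ⟨x, -, hx⟩ := Finset.mem_image.1 hC
    exact ⟨x, hx.symm⟩
  · rintro ⟨x, rfl⟩
    exact blk_mem_blocks s x

lemma blk_nonempty (s : Setoid (Fin n)) (x : Fin n) : (blk s x).Nonempty :=
  ⟨x, blk_self s x⟩

lemma nextFun_pos {s : Setoid (Fin n)} {b : Fin n}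
    (h : ((blk s b).filter fun a => b < a).Nonempty) :
    nextFun s b = ((blk s b).filter fun a => b < a).min' h := by
  simp only [nextFun, blk]
  rw [dif_pos]

lemma nextFun_neg {s : Setoid (Fin n)} {b : Fin n}
    (h : ¬ ((blk s b).filter fun a => b < a).Nonempty) :
    nextFun s b = (blk s b).min' (blk_nonempty s b) := by
  simp only [nextFun, blk]
  rw [dif_neg]
  exact h

lemma nextFun_mem_blk (s : Setoid (Fin n)) (b : Fin n) : nextFun s b ∈ blk s b := by
  by_cases h : ((blk s b).filter fun a => b < a).Nonempty
  · rw [nextFun_pos h]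
    exact Finset.mem_of_mem_filter _ (Finset.min'_mem _ h)
  · rw [nextFun_neg h]
    exact Finset.min'_mem _ _

lemma r_nextFun (s : Setoid (Fin n)) (b : Fin n) : s.r b (nextFun s b) :=
  mem_blk.1 (nextFun_mem_blk s b)

lemma nextFun_gt {s : Setoid (Fin n)} {b : Fin n}
    (h : ((blk s b).filter fun a => b < a).Nonempty) : b < nextFun s b := by
  rw [nextFun_pos h]
  exact (Finset.mem_filter.1 (Finset.min'_mem _ h)).2

lemma nextFun_le {s : Setoid (Fin n)} {b z : Fin n} (hz : z ∈ blk s b) (hbz : b < z) :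
    nextFun s b ≤ z := by
  have hne : ((blk s b).filter fun a => b < a).Nonempty :=
    ⟨z, Finset.mem_filter.2 ⟨hz, hbz⟩⟩
  rw [nextFun_pos hne]
  exact Finset.min'_le _ _ (Finset.mem_filter.2 ⟨hz, hbz⟩)

lemma nextFun_eq_of_between {s : Setoid (Fin n)} {x y : Fin n} (hr : s.r x y) (hxy : x < y)
    (hbetween : ∀ z ∈ blk s x, x < z → y ≤ z) : nextFun s x = y := by
  have hy : y ∈ blk s x := mem_blk.2 hr
  have hne : ((blk s x).filter fun a => x < a).Nonempty :=
    ⟨y, Finset.mem_filter.2 ⟨hy, hxy⟩⟩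
  rw [nextFun_pos hne]
  apply le_antisymm
  · exact Finset.min'_le _ _ (Finset.mem_filter.2 ⟨hy, hxy⟩)
  · have hm := Finset.min'_mem _ hne
    exact hbetween _ (Finset.mem_of_mem_filter _ hm) (Finset.mem_filter.1 hm).2

lemma nextFun_eq_min_of_top {s : Setoid (Fin n)} {x : Fin n}
    (h : ∀ z ∈ blk s x, z ≤ x) : nextFun s x = (blk s x).min' (blk_nonempty s x) := by
  apply nextFun_neg
  rintro ⟨z, hz⟩
  have := Finset.mem_filter.1 hz
  exact absurd (h z this.1) (not_le.2 this.2)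

lemma nextFun_ne {s : Setoid (Fin n)} {x y : Fin n} (hxy : x < y) (hr : s.r x y) :
    nextFun s x ≠ nextFun s y := by
  have hyx : y ∈ blk s x := mem_blk.2 hr
  have h1 : nextFun s x ≤ y := nextFun_le hyx hxy
  by_cases h : ((blk s y).filter fun a => y < a).Nonempty
  · have := nextFun_gt h
    exact fun he => absurd (he ▸ h1) (not_le.2 this)
  · rw [nextFun_neg h]
    have hx : x ∈ blk s y := mem_blk.2 (s.symm' hr)
    have h2 : (blk s y).min' (blk_nonempty s y) ≤ x := Finset.min'_le _ _ hx
    have h3 : x < nextFun s x := by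
      have hne : ((blk s x).filter fun a => x < a).Nonempty :=
        ⟨y, Finset.mem_filter.2 ⟨hyx, hxy⟩⟩
      exact nextFun_gt hne
    exact fun he => absurd (he ▸ h3) (not_lt.2 h2)

lemma nextFun_injective (s : Setoid (Fin n)) : Function.Injective (nextFun s) := by
  intro x y hxy
  by_contra hne
  have hr : s.r x y := by
    have h1 := r_nextFun s x
    have h2 := r_nextFun s y
    rw [hxy] at h1
    exact s.trans' h1 (s.symm' h2)
  rcases lt_trichotomy x y with h | h | h
  · exact nextFun_ne h hr hxy
  · exact hne h
  · exact nextFun_ne h (s.symm' hr) hxy.symm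

lemma nextFun_bijective (s : Setoid (Fin n)) : Function.Bijective (nextFun s) :=
  Finite.injective_iff_bijective.1 (nextFun_injective s)

lemma permOf_apply (s : Setoid (Fin n)) (x : Fin n) : permOf s x = nextFun s x := by
  rw [permOf, dif_pos (nextFun_bijective s)]
  rfl

lemma r_permOf (s : Setoid (Fin n)) (x : Fin n) : s.r x (permOf s x) := by
  rw [permOf_apply]; exact r_nextFun s x

lemma rel_of_sameCycle {t : Setoid (Fin n)} {ρ : Equiv.Perm (Fin n)}
    (h : ∀ x, t.r x (ρ x)) {x y : Fin n} (hc : ρ.SameCycle x y) : t.r x y := by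
  obtain ⟨k, hk⟩ := hc
  subst hk
  induction k using Int.induction_on with
  | zero => simpa using t.refl' x
  | succ i ih =>
      have he : (ρ ^ ((i : ℤ) + 1)) x = ρ ((ρ ^ (i : ℤ)) x) := by
        rw [add_comm, zpow_add, zpow_one]; rfl
      rw [he]
      exact t.trans' ih (h _)
  | pred i ih =>
      have he : (ρ ^ (-(i : ℤ) - 1)) x = ρ⁻¹ ((ρ ^ (-(i : ℤ))) x) := by
        have : -(i : ℤ) - 1 = -1 + -(i : ℤ) := by ring
        rw [this, zpow_add, zpow_neg_one]; rfl
      rw [he]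
      refine t.trans' ih ?_
      have := h (ρ⁻¹ ((ρ ^ (-(i : ℤ))) x))
      rw [Equiv.Perm.inv_def, Equiv.apply_symm_apply] at this
      exact t.symm' this

lemma sameCycle_min'_of_mem {s : Setoid (Fin n)} {a : Fin n} :
    ∀ (k : ℕ) (z : Fin n), z ∈ blk s a → z.val < k →
      (permOf s).SameCycle ((blk s a).min' (blk_nonempty s a)) z := by
  intro k
  induction k with
  | zero => intro z _ hz; omega
  | succ k ih =>
      intro z hz hzk
      by_cases hz0 : z = (blk s a).min' (blk_nonempty s a)
      · rw [hz0]
      · have hmin : (blk s a).min' (blk_nonempty s a) < z :=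
          lt_of_le_of_ne (Finset.min'_le _ _ hz) (Ne.symm hz0)
        have hBne : ((blk s a).filter fun u => u < z).Nonempty :=
          ⟨_, Finset.mem_filter.2 ⟨Finset.min'_mem _ _, hmin⟩⟩
        obtain ⟨w, hwmem', hwmax⟩ :
            ∃ w ∈ (blk s a).filter fun u => u < z,
              ∀ u ∈ (blk s a).filter fun u => u < z, u ≤ w :=
          ⟨_, Finset.max'_mem _ hBne, fun u hu => Finset.le_max' _ u hu⟩
        have hwmem : w ∈ blk s a := Finset.mem_of_mem_filter _ hwmem'
        have hwz : w < z := (Finset.mem_filter.1 hwmem').2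
        have hblkw : blk s w = blk s a := (blk_eq_of_r (mem_blk.1 hwmem)).symm
        have hnext : nextFun s w = z := by
          apply nextFun_eq_of_between
          · have h1 : s.r a w := mem_blk.1 hwmem
            have h2 : s.r a z := mem_blk.1 hz
            exact s.trans' (s.symm' h1) h2
          · exact hwz
          · intro u hu hwu
            rw [hblkw] at hu
            by_contra hzu
            push_neg at hzu
            have : u ≤ w := hwmax u (Finset.mem_filter.2 ⟨hu, hzu⟩)
            exact absurd hwu (not_lt.2 this)
        have hwk : w.val < k := by
          have := hwz
          omega
        refine (ih w hwmem hwk).trans ⟨1, ?_⟩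
        simpa [permOf_apply] using hnext

lemma cycleSetoid_permOf (s : Setoid (Fin n)) : cycleSetoid (permOf s) = s := by
  apply Setoid.ext
  intro a b
  constructor
  · intro h
    exact rel_of_sameCycle (r_permOf s) h
  · intro h
    have h1 := sameCycle_min'_of_mem (s := s) (a := a) (a.val + 1) a (blk_self s a) (by omega)
    have h2 := sameCycle_min'_of_mem (s := s) (a := a) (b.val + 1) b (mem_blk.2 h) (by omega)
    exact h1.symm.trans h2

end Aux
section Aux2

open Finset

variable {n : ℕ}

/-- Merge the blocks of `a` and `b` in `t`. -/
def mergeS (t : Setoid (Fin n)) (a b : Fin n) : Setoid (Fin n) where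
  r x y := t.r x y ∨ ((t.r x a ∨ t.r x b) ∧ (t.r y a ∨ t.r y b))
  iseqv := by
    refine ⟨fun x => Or.inl (t.refl' x), ?_, ?_⟩
    · rintro x y (h | ⟨hx, hy⟩)
      · exact Or.inl (t.symm' h)
      · exact Or.inr ⟨hy, hx⟩
    · rintro x y z (h | ⟨hx, hy⟩) (h' | ⟨hy', hz⟩)
      · exact Or.inl (t.trans' h h')
      · exact Or.inr ⟨hy'.imp (t.trans' h) (t.trans' h), hz⟩
      · exact Or.inr ⟨hx, hy.imp (fun hh => t.trans' (t.symm' h') hh)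
          (fun hh => t.trans' (t.symm' h') hh)⟩
      · exact Or.inr ⟨hx, hz⟩

lemma mergeS_r {t : Setoid (Fin n)} {a b x y : Fin n} :
    (mergeS t a b).r x y ↔
      t.r x y ∨ ((t.r x a ∨ t.r x b) ∧ (t.r y a ∨ t.r y b)) := Iff.rfl

lemma mergeS_rab (t : Setoid (Fin n)) (a b : Fin n) : (mergeS t a b).r a b :=
  Or.inr ⟨Or.inl (t.refl' a), Or.inr (t.refl' b)⟩

lemma mergeS_le {t u : Setoid (Fin n)} {a b : Fin n} (h1 : ∀ x y, t.r x y → u.r x y)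
    (h2 : u.r a b) : ∀ x y, (mergeS t a b).r x y → u.r x y := by
  rintro x y (h | ⟨hx, hy⟩)
  · exact h1 _ _ h
  · have hxb : u.r x b := (hx.imp (h1 x a) (h1 x b)).elim (fun h => u.trans' h h2) id
    have hyb : u.r y b := (hy.imp (h1 y a) (h1 y b)).elim (fun h => u.trans' h h2) id
    exact u.trans' hxb (u.symm' hyb)

lemma blk_mergeS_mem {t : Setoid (Fin n)} {a b x : Fin n} (hx : t.r x a ∨ t.r x b) :
    blk (mergeS t a b) x = blk t a ∪ blk t b := by
  ext z
  simp only [mem_blk, Finset.mem_union, mergeS_r]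
  constructor
  · rintro (h | ⟨_, hz⟩)
    · rcases hx with h' | h'
      · exact Or.inl (t.trans' (t.symm' h') h)
      · exact Or.inr (t.trans' (t.symm' h') h)
    · exact hz.imp t.symm' t.symm'
  · rintro (h | h)
    · exact Or.inr ⟨hx, Or.inl (t.symm' h)⟩
    · exact Or.inr ⟨hx, Or.inr (t.symm' h)⟩

lemma blk_mergeS_not_mem {t : Setoid (Fin n)} {a b x : Fin n} (hx : ¬(t.r x a ∨ t.r x b)) :
    blk (mergeS t a b) x = blk t x := by
  ext z
  simp only [mem_blk, mergeS_r]
  constructor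
  · rintro (h | ⟨hx', _⟩)
    · exact h
    · exact absurd hx' hx
  · exact fun h => Or.inl h

lemma blocks_mergeS {t : Setoid (Fin n)} {a b : Fin n} (hab : ¬ t.r a b) :
    blocks (mergeS t a b) =
      insert (blk t a ∪ blk t b) (((blocks t).erase (blk t a)).erase (blk t b)) := by
  ext C
  simp only [mem_blocks, Finset.mem_insert, Finset.mem_erase]
  constructor
  · rintro ⟨x, hC⟩
    by_cases hx : t.r x a ∨ t.r x b
    · left; rw [hC, blk_mergeS_mem hx]
    · right
      push_neg at hx
      rw [hC, blk_mergeS_not_mem (by push_neg; exact hx)]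
      refine ⟨?_, ?_, ⟨x, rfl⟩⟩
      · intro he
        exact hx.2 (t.symm' (mem_blk.1 (he ▸ blk_self t x)))
      · intro he
        exact hx.1 (t.symm' (mem_blk.1 (he ▸ blk_self t x)))
  · rintro (hC | ⟨hCb, hCa, x, hCx⟩)
    · exact ⟨a, by rw [hC, blk_mergeS_mem (Or.inl (t.refl' a))]⟩
    · refine ⟨x, ?_⟩
      rw [hCx, blk_mergeS_not_mem ?_]
      rintro (h | h)
      · exact hCa (by rw [hCx, blk_eq_of_r h])
      · exact hCb (by rw [hCx, blk_eq_of_r h])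

lemma card_blocks_mergeS {t : Setoid (Fin n)} {a b : Fin n} (hab : ¬ t.r a b) :
    (blocks (mergeS t a b)).card + 1 = (blocks t).card := by
  have hA : blk t a ∈ blocks t := blk_mem_blocks t a
  have hab' : blk t a ≠ blk t b := by
    intro h
    exact hab (mem_blk.1 (h ▸ blk_self t b : b ∈ blk t a))
  have hB : blk t b ∈ (blocks t).erase (blk t a) :=
    Finset.mem_erase.2 ⟨Ne.symm hab', blk_mem_blocks t b⟩
  have hnotin : (blk t a ∪ blk t b) ∉ ((blocks t).erase (blk t a)).erase (blk t b) := by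
    intro h
    obtain ⟨x, hx⟩ := mem_blocks.1 (Finset.mem_of_mem_erase (Finset.mem_of_mem_erase h))
    have ha' : a ∈ blk t x := by rw [← hx]; exact Finset.mem_union_left _ (blk_self t a)
    have hb' : b ∈ blk t x := by rw [← hx]; exact Finset.mem_union_right _ (blk_self t b)
    exact hab (t.trans' (t.symm' (mem_blk.1 ha')) (mem_blk.1 hb'))
  rw [blocks_mergeS hab, Finset.card_insert_of_notMem hnotin,
    Finset.card_erase_of_mem hB, Finset.card_erase_of_mem hA]
  have h2 : 2 ≤ (blocks t).card :=
    Finset.one_lt_card.2 ⟨blk t a, hA, blk t b, blk_mem_blocks t b, hab'⟩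
  omega

lemma mergeS_eq_self {t : Setoid (Fin n)} {a b : Fin n} (hab : t.r a b) :
    mergeS t a b = t := by
  apply Setoid.ext
  intro x y
  constructor
  · rintro (h | ⟨hx, hy⟩)
    · exact h
    · have hx' : t.r x a := hx.elim id fun h => t.trans' h (t.symm' hab)
      have hy' : t.r y a := hy.elim id fun h => t.trans' h (t.symm' hab)
      exact t.trans' hx' (t.symm' hy')
  · exact Or.inl

lemma card_blocks_le_mergeS (t : Setoid (Fin n)) (a b : Fin n) :
    (blocks t).card ≤ (blocks (mergeS t a b)).card + 1 := by
  by_cases hab : t.r a b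
  · rw [mergeS_eq_self hab]; omega
  · rw [card_blocks_mergeS hab]

lemma card_blocks_mergeS_le (t : Setoid (Fin n)) (a b : Fin n) :
    (blocks (mergeS t a b)).card ≤ (blocks t).card := by
  by_cases hab : t.r a b
  · rw [mergeS_eq_self hab]
  · rw [← card_blocks_mergeS hab]; omega

lemma sameCycle_r (ρ : Equiv.Perm (Fin n)) (x y : Fin n) :
    (cycleSetoid ρ).r x y ↔ ρ.SameCycle x y := Iff.rfl

lemma cycleSetoid_r_apply (ρ : Equiv.Perm (Fin n)) (x : Fin n) :
    (cycleSetoid ρ).r x (ρ x) := ⟨1, by simp⟩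

lemma mergeS_cycleSetoid_aux (ρ : Equiv.Perm (Fin n)) (a b : Fin n) (x : Fin n) :
    (mergeS (cycleSetoid (Equiv.swap a b * ρ)) a b).r x (ρ x) := by
  set τρ := Equiv.swap a b * ρ with hτρ
  have hx : (cycleSetoid τρ).r x (τρ x) := cycleSetoid_r_apply τρ x
  have hρ : ρ x = Equiv.swap a b (τρ x) := by
    simp [hτρ, Equiv.swap_apply_self]
  by_cases h1 : τρ x = a
  · rw [hρ, h1, Equiv.swap_apply_left]
    exact Or.inr ⟨Or.inl (h1 ▸ hx), Or.inr ((cycleSetoid τρ).refl' b)⟩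
  · by_cases h2 : τρ x = b
    · rw [hρ, h2, Equiv.swap_apply_right]
      exact Or.inr ⟨Or.inr (h2 ▸ hx), Or.inl ((cycleSetoid τρ).refl' a)⟩
    · rw [hρ, Equiv.swap_apply_of_ne_of_ne h1 h2]
      exact Or.inl hx

lemma mergeS_cycleSetoid_aux' (ρ : Equiv.Perm (Fin n)) (a b : Fin n) (x : Fin n) :
    (mergeS (cycleSetoid ρ) a b).r x ((Equiv.swap a b * ρ) x) := by
  have hx : (cycleSetoid ρ).r x (ρ x) := cycleSetoid_r_apply ρ x
  have hρ : (Equiv.swap a b * ρ) x = Equiv.swap a b (ρ x) := rfl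
  by_cases h1 : ρ x = a
  · rw [hρ, h1, Equiv.swap_apply_left]
    exact Or.inr ⟨Or.inl (h1 ▸ hx), Or.inr ((cycleSetoid ρ).refl' b)⟩
  · by_cases h2 : ρ x = b
    · rw [hρ, h2, Equiv.swap_apply_right]
      exact Or.inr ⟨Or.inr (h2 ▸ hx), Or.inl ((cycleSetoid ρ).refl' a)⟩
    · rw [hρ, Equiv.swap_apply_of_ne_of_ne h1 h2]
      exact Or.inl hx

lemma mergeS_cycleSetoid_swap_mul (ρ : Equiv.Perm (Fin n)) (a b : Fin n) :
    mergeS (cycleSetoid ρ) a b = mergeS (cycleSetoid (Equiv.swap a b * ρ)) a b := by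
  apply Setoid.ext
  intro x y
  constructor
  · apply mergeS_le
    · intro x y h
      exact rel_of_sameCycle (t := mergeS (cycleSetoid (Equiv.swap a b * ρ)) a b)
        (mergeS_cycleSetoid_aux ρ a b) h
    · exact mergeS_rab _ a b
  · apply mergeS_le
    · intro x y h
      exact rel_of_sameCycle (t := mergeS (cycleSetoid ρ) a b)
        (mergeS_cycleSetoid_aux' ρ a b) h
    · exact mergeS_rab _ a b

lemma card_blocks_cycleSetoid_swap_mul (ρ : Equiv.Perm (Fin n)) (a b : Fin n) :
    (blocks (cycleSetoid ρ)).card ≤ (blocks (cycleSetoid (Equiv.swap a b * ρ))).card + 1 :=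
  calc (blocks (cycleSetoid ρ)).card
      ≤ (blocks (mergeS (cycleSetoid ρ) a b)).card + 1 := card_blocks_le_mergeS _ a b
    _ = (blocks (mergeS (cycleSetoid (Equiv.swap a b * ρ)) a b)).card + 1 := by
        rw [mergeS_cycleSetoid_swap_mul]
    _ ≤ (blocks (cycleSetoid (Equiv.swap a b * ρ))).card + 1 := by
        have := card_blocks_mergeS_le (cycleSetoid (Equiv.swap a b * ρ)) a b
        omega

end Aux2
section Aux3

open Finset

variable {n : ℕ}

/-- Characterizing property of `nextFun`. -/
def IsNext (s : Setoid (Fin n)) (x y : Fin n) : Prop :=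
  y ∈ blk s x ∧ ((x < y ∧ ∀ z ∈ blk s x, x < z → y ≤ z) ∨
    ((∀ z ∈ blk s x, z ≤ x) ∧ ∀ z ∈ blk s x, y ≤ z))

lemma isNext_nextFun (s : Setoid (Fin n)) (x : Fin n) : IsNext s x (nextFun s x) := by
  refine ⟨nextFun_mem_blk s x, ?_⟩
  by_cases h : ((blk s x).filter fun a => x < a).Nonempty
  · exact Or.inl ⟨nextFun_gt h, fun z hz hxz => nextFun_le hz hxz⟩
  · right
    constructor
    · intro z hz
      by_contra hc
      exact h ⟨z, Finset.mem_filter.2 ⟨hz, not_le.1 hc⟩⟩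
    · intro z hz
      rw [nextFun_neg h]
      exact Finset.min'_le _ _ hz

lemma isNext_unique {s : Setoid (Fin n)} {x y₁ y₂ : Fin n}
    (h1 : IsNext s x y₁) (h2 : IsNext s x y₂) : y₁ = y₂ := by
  obtain ⟨hm1, h1⟩ := h1
  obtain ⟨hm2, h2⟩ := h2
  rcases h1 with ⟨hlt1, hle1⟩ | ⟨hall1, hmin1⟩
  · rcases h2 with ⟨hlt2, hle2⟩ | ⟨hall2, hmin2⟩
    · exact le_antisymm (hle1 _ hm2 hlt2) (hle2 _ hm1 hlt1)
    · exact absurd (hall2 _ hm1) (not_le.2 hlt1)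
  · rcases h2 with ⟨hlt2, hle2⟩ | ⟨hall2, hmin2⟩
    · exact absurd (hall1 _ hm2) (not_le.2 hlt2)
    · exact le_antisymm (hmin1 _ hm2) (hmin2 _ hm1)

lemma nextFun_eq_of_isNext {s : Setoid (Fin n)} {x y : Fin n} (h : IsNext s x y) :
    nextFun s x = y := isNext_unique (isNext_nextFun s x) h

lemma nextFun_congr {s t : Setoid (Fin n)} {x : Fin n} (h : blk s x = blk t x) :
    nextFun s x = nextFun t x := by
  apply nextFun_eq_of_isNext
  have := isNext_nextFun t x
  unfold IsNext at this ⊢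
  rw [h]
  exact this

lemma blk_topS (hn : 0 < n) (x : Fin n) : blk (topS n) x = Finset.univ := by
  ext z
  simp only [mem_blk, Finset.mem_univ, iff_true]
  exact trivial

lemma z0_le (hn : 0 < n) (u : Fin n) : (⟨0, hn⟩ : Fin n) ≤ u := by
  simp [Fin.le_def]

lemma cy_gt {x y : Fin n} (h : x < y) :
    x < permOf (topS n) x ∧ permOf (topS n) x ≤ y := by
  have hn : 0 < n := Fin.pos x
  have hy : y ∈ blk (topS n) x := mem_blk.2 trivial
  have hne : ((blk (topS n) x).filter fun a => x < a).Nonempty :=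
    ⟨y, Finset.mem_filter.2 ⟨hy, h⟩⟩
  rw [permOf_apply]
  exact ⟨nextFun_gt hne, nextFun_le hy h⟩

lemma cy_eq_z0 (hn : 0 < n) {x : Fin n} (hmax : ∀ z, z ≤ x) :
    permOf (topS n) x = ⟨0, hn⟩ := by
  rw [permOf_apply]
  apply nextFun_eq_of_isNext
  refine ⟨mem_blk.2 trivial, Or.inr ⟨fun z _ => hmax z, fun z _ => z0_le hn z⟩⟩

/-- `x` is the minimum of its block. -/
def IsMinBlk (s : Setoid (Fin n)) (x : Fin n) : Prop := ∀ z, s.r x z → x ≤ z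

lemma card_minBlk (hn : 0 < n) (s : Setoid (Fin n)) :
    (Finset.univ.filter fun x => IsMinBlk s x).card = (blocks s).card := by
  apply Finset.card_bij (fun x _ => blk s x)
  · intro a ha
    exact blk_mem_blocks s a
  · intro a ha b hb hab
    have h1 : IsMinBlk s a := (Finset.mem_filter.1 ha).2
    have h2 : IsMinBlk s b := (Finset.mem_filter.1 hb).2
    have hr : s.r a b := mem_blk.1 (hab ▸ blk_self s b : b ∈ blk s a)
    exact le_antisymm (h1 b hr) (h2 a (s.symm' hr))
  · intro C hC
    obtain ⟨z, rfl⟩ := mem_blocks.1 hC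
    refine ⟨(blk s z).min' (blk_nonempty s z), ?_, ?_⟩
    · apply Finset.mem_filter.2
      refine ⟨Finset.mem_univ _, ?_⟩
      intro w hw
      apply Finset.min'_le
      have hzm : s.r z ((blk s z).min' (blk_nonempty s z)) :=
        mem_blk.1 (Finset.min'_mem _ _)
      exact mem_blk.2 (s.trans' hzm hw)
    · exact (blk_eq_of_r (mem_blk.1 (Finset.min'_mem _ (blk_nonempty s z)))).symm

lemma card_filter_comp (p : Fin n → Prop) (e : Equiv.Perm (Fin n)) :
    (Finset.univ.filter fun x => p (e x)).card = (Finset.univ.filter p).card := by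
  have himg : (Finset.univ.filter fun x => p (e x)).image e = Finset.univ.filter p := by
    ext y
    simp only [Finset.mem_image, Finset.mem_filter, Finset.mem_univ, true_and]
    constructor
    · rintro ⟨x, hx, rfl⟩
      exact hx
    · intro hy
      exact ⟨e⁻¹ y, by simpa using hy, by simp⟩
  rw [← himg, Finset.card_image_of_injective _ e.injective]

lemma sigma_apply (s : Setoid (Fin n)) (x : Fin n) :
    ((permOf s)⁻¹ * permOf (topS n)) x = (permOf s)⁻¹ (permOf (topS n) x) := rfl

lemma sigma_le_iff (hn : 0 < n) (s : Setoid (Fin n)) (x : Fin n) :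
    ((permOf s)⁻¹ * permOf (topS n)) x ≤ x ↔
      (permOf (topS n) x = ⟨0, hn⟩ ∨ ¬ IsMinBlk s (permOf (topS n) x)) := by
  set σ := (permOf s)⁻¹ * permOf (topS n) with hσ
  set cyx := permOf (topS n) x with hcyx
  have hPσ : permOf s (σ x) = cyx := by
    rw [hσ, sigma_apply, Equiv.Perm.inv_def, Equiv.apply_symm_apply]
  have hrσ : s.r (σ x) cyx := by
    rw [← hPσ]; exact r_permOf s (σ x)
  by_cases hex : ∃ z, x < z
  · obtain ⟨y0, hy0⟩ := hex
    have h1 := cy_gt hy0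
    have hxlt : x < cyx := h1.1
    have hcy_ne : cyx ≠ ⟨0, hn⟩ := by
      intro he
      exact absurd (he ▸ hxlt) (not_lt.2 (z0_le hn x))
    have hbtw : ∀ z, x < z → cyx ≤ z := by
      intro z hz
      exact (cy_gt hz).2
    constructor
    · intro hle
      right
      intro hmin
      have : cyx ≤ σ x := hmin _ (s.symm' hrσ)
      exact absurd (le_trans this hle) (not_le.2 hxlt)
    · rintro (he | hmin)
      · exact absurd he hcy_ne
      · by_contra hc
        push_neg at hc
        have hge : cyx ≤ σ x := hbtw _ hc
        rw [IsMinBlk] at hmin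
        push_neg at hmin
        obtain ⟨w, hrw, hw⟩ := hmin
        have hwlt : w < cyx := hw
        rcases eq_or_lt_of_le hge with heq | hlt
        · -- σ x = cyx : nextFun (cyx) = cyx, impossible
          have hnext : nextFun s cyx = cyx := by
            rw [← heq] at hPσ
            rw [← permOf_apply]
            exact hPσ
          have := isNext_nextFun s cyx
          rw [hnext] at this
          rcases this.2 with ⟨hlt', _⟩ | ⟨_, hmin'⟩
          · exact absurd hlt' (lt_irrefl _)
          · exact absurd (hmin' w (mem_blk.2 hrw)) (not_le.2 hwlt)
        · -- σ x > cyx, nextFun (σ x) = cyx < σ x : min of block, but w < cyx in block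
          have hnext : nextFun s (σ x) = cyx := by rw [← permOf_apply, hPσ]
          have := isNext_nextFun s (σ x)
          rw [hnext] at this
          rcases this.2 with ⟨hlt', _⟩ | ⟨_, hmin'⟩
          · exact absurd (lt_trans hlt hlt') (lt_irrefl _)
          · have hwblk : w ∈ blk s (σ x) := mem_blk.2 (s.trans' hrσ hrw)
            exact absurd (hmin' w hwblk) (not_le.2 hwlt)
  · push_neg at hex
    have hcy : cyx = ⟨0, hn⟩ := cy_eq_z0 hn hex
    simp only [hcy]
    constructor
    · intro _; exact Or.inl trivial
    · intro _; exact hex _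

lemma card_dfix (hn : 0 < n) (s : Setoid (Fin n)) :
    (Finset.univ.filter fun x => ((permOf s)⁻¹ * permOf (topS n)) x ≤ x).card
      + (blocks s).card = n + 1 := by
  have hq : (blocks s).card = (Finset.univ.filter fun x => IsMinBlk s x).card :=
    (card_minBlk hn s).symm
  have hfc : (Finset.univ.filter fun x => ((permOf s)⁻¹ * permOf (topS n)) x ≤ x) =
      (Finset.univ.filter fun x =>
        permOf (topS n) x = ⟨0, hn⟩ ∨ ¬ IsMinBlk s (permOf (topS n) x)) := by
    apply Finset.filter_congr
    intro x _
    simpa using sigma_le_iff hn s x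
  have hcf : (Finset.univ.filter fun x =>
        permOf (topS n) x = ⟨0, hn⟩ ∨ ¬ IsMinBlk s (permOf (topS n) x)).card =
      (Finset.univ.filter fun y => y = ⟨0, hn⟩ ∨ ¬ IsMinBlk s y).card := by
    have h := card_filter_comp (fun y => y = ⟨0, hn⟩ ∨ ¬ IsMinBlk s y) (permOf (topS n))
    convert h using 2 <;> congr!
  rw [hfc, hcf]
  have hins : (Finset.univ.filter fun y => y = ⟨0, hn⟩ ∨ ¬ IsMinBlk s y) =
      insert ⟨0, hn⟩ (Finset.univ.filter fun y => ¬ IsMinBlk s y) := by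
    ext y
    simp only [Finset.mem_filter, Finset.mem_univ, true_and, Finset.mem_insert]
  rw [hins]
  have hz0min : IsMinBlk s ⟨0, hn⟩ := fun z _ => z0_le hn z
  have hz0 : (⟨0, hn⟩ : Fin n) ∉ Finset.univ.filter fun y => ¬ IsMinBlk s y := by
    simp [hz0min]
  rw [Finset.card_insert_of_notMem hz0]
  have hcompl : (Finset.univ.filter fun y => IsMinBlk s y).card
      + (Finset.univ.filter fun y => ¬ IsMinBlk s y).card = n := by
    rw [Finset.card_filter_add_card_filter_not (p := fun y => IsMinBlk s y)]
    simp
  omega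

end Aux3
section Aux4

open Finset

variable {n : ℕ}

lemma exists_merge {s : Setoid (Fin n)} (hn : 0 < n) (hs : IsNC s)
    (hq : 2 ≤ (blocks s).card) :
    ∃ (s' : Setoid (Fin n)) (a b : Fin n),
      IsNC s' ∧ (blocks s').card + 1 = (blocks s).card ∧
      permOf s' = permOf s * Equiv.swap a b := by
  set z0 : Fin n := ⟨0, hn⟩ with hz0def
  -- there is an element not related to z0
  have hAne : (Finset.univ.filter fun x => ¬ s.r z0 x).Nonempty := by
    by_contra hc
    rw [Finset.not_nonempty_iff_eq_empty, Finset.filter_eq_empty_iff] at hc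
    have hall : ∀ x, s.r z0 x := by
      intro x
      have := hc (Finset.mem_univ x)
      simpa using this
    have hone : blocks s = {blk s z0} := by
      ext C
      simp only [Finset.mem_singleton, mem_blocks]
      constructor
      · rintro ⟨x, rfl⟩
        exact (blk_eq_of_r (hall x)).symm
      · rintro rfl
        exact ⟨z0, rfl⟩
    rw [hone] at hq
    simp at hq
  set m := (Finset.univ.filter fun x => ¬ s.r z0 x).min' hAne with hmdef
  have hm : ¬ s.r z0 m := by
    have := Finset.min'_mem _ hAne
    simpa using (Finset.mem_filter.1 this).2
  have f1 : ∀ z, z < m → s.r z0 z := by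
    intro z hz
    by_contra hc
    have : m ≤ z := Finset.min'_le _ _ (Finset.mem_filter.2 ⟨Finset.mem_univ z, hc⟩)
    exact absurd hz (not_lt.2 this)
  have hz0m : z0 < m :=
    lt_of_le_of_ne (z0_le hn m) (fun he => hm (he ▸ s.refl' z0))
  -- the largest element of the block of z0 below m
  have hane : (Finset.univ.filter fun u => s.r z0 u ∧ u < m).Nonempty :=
    ⟨z0, Finset.mem_filter.2 ⟨Finset.mem_univ _, s.refl' z0, hz0m⟩⟩
  set a := (Finset.univ.filter fun u => s.r z0 u ∧ u < m).max' hane with hadef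
  have ha : s.r z0 a ∧ a < m := by
    have := Finset.max'_mem _ hane
    exact (Finset.mem_filter.1 this).2
  have hamax : ∀ u, s.r z0 u → u < m → u ≤ a := fun u h1 h2 =>
    Finset.le_max' _ u (Finset.mem_filter.2 ⟨Finset.mem_univ u, h1, h2⟩)
  have hgap : ∀ u, a < u → u < m → False := fun u h1 h2 =>
    absurd h1 (not_lt.2 (hamax u (f1 u h2) h2))
  -- the block of m, its max b0
  set b0 := (blk s m).max' (blk_nonempty s m) with hb0def
  have hb0 : s.r m b0 := mem_blk.1 (Finset.max'_mem _ _)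
  have hb0max : ∀ u, s.r m u → u ≤ b0 := fun u h => Finset.le_max' _ u (mem_blk.2 h)
  have hBmin : ∀ u, s.r m u → m ≤ u := by
    intro u h
    by_contra hc
    exact hm (s.trans' (f1 u (not_le.1 hc)) (s.symm' h))
  have hmb0 : m ≤ b0 := hBmin b0 hb0
  have f2' : ∀ u, s.r z0 u → a < u → b0 < u := by
    intro u h1 h2
    have hum : ¬ u < m := fun hc => hgap u h2 hc
    have hune : u ≠ m := fun he => hm (he ▸ h1)
    have hmu : m < u := lt_of_le_of_ne (not_lt.1 hum) (Ne.symm hune)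
    by_contra hc
    rcases eq_or_lt_of_le (not_lt.1 hc) with he | hlt
    · exact hm (s.trans' (he ▸ h1) (s.symm' hb0))
    · exact hm (hs z0 m u b0 hz0m hmu hlt h1 hb0)
  have ham : a < m := ha.2
  have hab0 : a < b0 := lt_of_lt_of_le ham hmb0
  refine ⟨mergeS s z0 m, a, b0, ?_, card_blocks_mergeS hm, ?_⟩
  · -- non-crossing of the merged partition
    intro p1 p2 p3 p4 h12 h23 h34 h13 h24
    have hU : ∀ {p q : Fin n}, (s.r p z0 ∨ s.r p m) → (s.r q z0 ∨ s.r q m) →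
        (mergeS s z0 m).r p q := fun h1 h2 => Or.inr ⟨h1, h2⟩
    rcases h13 with h13 | ⟨hU1, hU3⟩
    · rcases h24 with h24 | ⟨hU2, hU4⟩
      · exact Or.inl (hs p1 p2 p3 p4 h12 h23 h34 h13 h24)
      · rcases hU2 with hU2 | hU2 <;> rcases hU4 with hU4 | hU4
        · exact Or.inl (hs p1 p2 p3 p4 h12 h23 h34 h13 (s.trans' hU2 (s.symm' hU4)))
        · -- p2 ∈ A, p4 ∈ B
          by_cases hp1 : p1 = z0
          · exact hU (Or.inl (hp1 ▸ s.refl' z0)) (Or.inl hU2)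
          · have hz0p1 : z0 < p1 := lt_of_le_of_ne (z0_le hn p1) (Ne.symm hp1)
            have := hs z0 p1 p2 p3 hz0p1 h12 h23 (s.symm' hU2) h13
            exact hU (Or.inl (s.symm' this)) (Or.inl hU2)
        · -- p2 ∈ B, p4 ∈ A
          rcases lt_trichotomy p1 m with hp1 | hp1 | hp1
          · exact hU (Or.inl (s.symm' (f1 p1 hp1))) (Or.inr hU2)
          · exact hU (Or.inr (hp1 ▸ s.refl' p1)) (Or.inr hU2)
          · have := hs m p1 p2 p3 hp1 h12 h23 (s.symm' hU2) h13
            exact hU (Or.inr (s.symm' this)) (Or.inr hU2)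
        · exact Or.inl (hs p1 p2 p3 p4 h12 h23 h34 h13 (s.trans' hU2 (s.symm' hU4)))
    · rcases h24 with h24 | ⟨hU2, hU4⟩
      · rcases hU1 with hU1 | hU1 <;> rcases hU3 with hU3 | hU3
        · exact Or.inl (hs p1 p2 p3 p4 h12 h23 h34 (s.trans' hU1 (s.symm' hU3)) h24)
        · -- p1 ∈ A, p3 ∈ B
          rcases lt_trichotomy p2 m with hp2 | hp2 | hp2
          · exact hU (Or.inl hU1) (Or.inl (s.symm' (f1 p2 hp2)))
          · exact hU (Or.inl hU1) (Or.inr (hp2 ▸ s.refl' p2))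
          · have := hs m p2 p3 p4 hp2 h23 h34 (s.symm' hU3) h24
            exact hU (Or.inl hU1) (Or.inr (s.symm' this))
        · -- p1 ∈ B, p3 ∈ A
          by_cases hp2 : p2 = z0
          · exact hU (Or.inr hU1) (Or.inl (hp2 ▸ s.refl' z0))
          · have hz0p2 : z0 < p2 := lt_of_le_of_ne (z0_le hn p2) (Ne.symm hp2)
            have := hs z0 p2 p3 p4 hz0p2 h23 h34 (s.symm' hU3) h24
            exact hU (Or.inr hU1) (Or.inl (s.symm' this))
        · exact Or.inl (hs p1 p2 p3 p4 h12 h23 h34 (s.trans' hU1 (s.symm' hU3)) h24)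
      · exact Or.inr ⟨hU1, hU2⟩
  · -- permOf (mergeS s z0 m) = permOf s * swap a b0
    apply Equiv.ext
    intro x
    rw [Equiv.Perm.mul_apply, permOf_apply, permOf_apply]
    by_cases hxa : x = a
    · rw [hxa, Equiv.swap_apply_left]
      have h2 : nextFun s b0 = m := by
        apply nextFun_eq_of_isNext
        refine ⟨mem_blk.2 (s.symm' hb0), Or.inr ⟨?_, ?_⟩⟩
        · intro z hz
          exact hb0max z (s.trans' hb0 (mem_blk.1 hz))
        · intro z hz
          exact hBmin z (s.trans' hb0 (mem_blk.1 hz))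
      have h1 : nextFun (mergeS s z0 m) a = m := by
        apply nextFun_eq_of_isNext
        refine ⟨mem_blk.2 (Or.inr ⟨Or.inl (s.symm' ha.1), Or.inr (s.refl' m)⟩), Or.inl ⟨ham, ?_⟩⟩
        intro z hz haz
        have hz' := mem_blk.1 hz
        have hblk : blk (mergeS s z0 m) a = blk s z0 ∪ blk s m :=
          blk_mergeS_mem (Or.inl (s.symm' ha.1))
        rw [hblk, Finset.mem_union] at hz
        rcases hz with hz | hz
        · have := f2' z (mem_blk.1 hz) haz
          exact le_trans hmb0 (le_of_lt this)
        · exact hBmin z (mem_blk.1 hz)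
      rw [h1, h2]
    · by_cases hxb : x = b0
      · rw [hxb, Equiv.swap_apply_right]
        have hblk : blk (mergeS s z0 m) b0 = blk s z0 ∪ blk s m :=
          blk_mergeS_mem (Or.inr (s.symm' hb0))
        rcases (isNext_nextFun s a).2 with ⟨hlt, hle⟩ | ⟨hall, hmin⟩
        · have hrv : s.r z0 (nextFun s a) := s.trans' ha.1 (r_nextFun s a)
          have hbv : b0 < nextFun s a := f2' _ hrv hlt
          apply nextFun_eq_of_isNext
          refine ⟨mem_blk.2 (Or.inr ⟨Or.inr (s.symm' hb0), Or.inl (s.symm' hrv)⟩),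
            Or.inl ⟨hbv, ?_⟩⟩
          intro z hz hxz
          rw [hblk, Finset.mem_union] at hz
          rcases hz with hz | hz
          · have haz : a < z := lt_trans hab0 hxz
            exact hle z (mem_blk.2 (s.trans' (s.symm' ha.1) (mem_blk.1 hz))) haz
          · exact absurd hxz (not_lt.2 (hb0max z (mem_blk.1 hz)))
        · have hv : nextFun s a = z0 :=
            le_antisymm (hmin z0 (mem_blk.2 (s.symm' ha.1))) (z0_le hn _)
          rw [hv]
          apply nextFun_eq_of_isNext
          refine ⟨mem_blk.2 (Or.inr ⟨Or.inr (s.symm' hb0), Or.inl (s.refl' z0)⟩),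
            Or.inr ⟨?_, fun z _ => z0_le hn z⟩⟩
          intro z hz
          rw [hblk, Finset.mem_union] at hz
          rcases hz with hz | hz
          · have : z ≤ a := hall z (mem_blk.2 (s.trans' (s.symm' ha.1) (mem_blk.1 hz)))
            exact le_trans this (le_of_lt hab0)
          · exact hb0max z (mem_blk.1 hz)
      · rw [Equiv.swap_apply_of_ne_of_ne hxa hxb]
        by_cases hUx : s.r x z0 ∨ s.r x m
        · have hblk : blk (mergeS s z0 m) x = blk s z0 ∪ blk s m := blk_mergeS_mem hUx
          rcases hUx with hxA | hxB
          · -- x in the block of z0, x ≠ a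
            by_cases hxm : x < m
            · have hxa' : x < a :=
                lt_of_le_of_ne (hamax x (s.symm' hxA) hxm) hxa
              rcases (isNext_nextFun s x).2 with ⟨hlt, hle⟩ | ⟨hall, _⟩
              · apply nextFun_eq_of_isNext
                refine ⟨mem_blk.2 (Or.inl (r_nextFun s x)), Or.inl ⟨hlt, ?_⟩⟩
                intro z hz hxz
                rw [hblk, Finset.mem_union] at hz
                rcases hz with hz | hz
                · exact hle z (mem_blk.2 (s.trans' hxA (mem_blk.1 hz))) hxz
                · have h1 : nextFun s x ≤ a :=
                    hle a (mem_blk.2 (s.trans' hxA ha.1)) hxa'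
                  have h2 : m ≤ z := hBmin z (mem_blk.1 hz)
                  exact le_trans h1 (le_trans (le_of_lt ham) h2)
              · exact absurd (hall a (mem_blk.2 (s.trans' hxA ha.1))) (not_le.2 hxa')
            · have hxm' : m < x := by
                rcases lt_trichotomy x m with h | h | h
                · exact absurd h hxm
                · exact absurd (h ▸ s.symm' hxA) hm
                · exact h
              have hax : a < x := lt_trans ham hxm'
              have hb0x : b0 < x := f2' x (s.symm' hxA) hax
              rcases (isNext_nextFun s x).2 with ⟨hlt, hle⟩ | ⟨hall, hmin⟩
              · apply nextFun_eq_of_isNext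
                refine ⟨mem_blk.2 (Or.inl (r_nextFun s x)), Or.inl ⟨hlt, ?_⟩⟩
                intro z hz hxz
                rw [hblk, Finset.mem_union] at hz
                rcases hz with hz | hz
                · exact hle z (mem_blk.2 (s.trans' hxA (mem_blk.1 hz))) hxz
                · exact absurd (lt_of_lt_of_le hxz (le_trans (hb0max z (mem_blk.1 hz)) (le_of_lt hb0x))) (lt_irrefl x)
              · have hv : nextFun s x = z0 :=
                  le_antisymm (hmin z0 (mem_blk.2 hxA)) (z0_le hn _)
                rw [hv]
                apply nextFun_eq_of_isNext
                refine ⟨mem_blk.2 (Or.inl hxA), Or.inr ⟨?_, fun z _ => z0_le hn z⟩⟩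
                intro z hz
                rw [hblk, Finset.mem_union] at hz
                rcases hz with hz | hz
                · exact hall z (mem_blk.2 (s.trans' hxA (mem_blk.1 hz)))
                · exact le_trans (hb0max z (mem_blk.1 hz)) (le_of_lt hb0x)
          · -- x in the block of m, x ≠ b0
            have hxb0 : x < b0 :=
              lt_of_le_of_ne (hb0max x (s.symm' hxB)) hxb
            have hmx : m ≤ x := hBmin x (s.symm' hxB)
            rcases (isNext_nextFun s x).2 with ⟨hlt, hle⟩ | ⟨hall, _⟩
            · apply nextFun_eq_of_isNext
              refine ⟨mem_blk.2 (Or.inl (r_nextFun s x)), Or.inl ⟨hlt, ?_⟩⟩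
              intro z hz hxz
              rw [hblk, Finset.mem_union] at hz
              rcases hz with hz | hz
              · -- z related to z0 : then z > b0
                have hz' : s.r z0 z := mem_blk.1 hz
                have haz : a < z := by
                  rcases le_or_gt z a with h | h
                  · exact absurd (lt_of_le_of_lt (le_trans h ham.le) (lt_of_le_of_lt hmx hxz)) (lt_irrefl z)
                  · exact h
                have := f2' z hz' haz
                have h1 : nextFun s x ≤ b0 := hle b0 (mem_blk.2 (s.trans' hxB hb0)) hxb0
                exact le_trans h1 (le_of_lt this)
              · exact hle z (mem_blk.2 (s.trans' hxB (mem_blk.1 hz))) hxz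
            · exact absurd (hall b0 (mem_blk.2 (s.trans' hxB hb0))) (not_le.2 hxb0)
        · exact nextFun_congr (blk_mergeS_not_mem hUx)

lemma card_blocks_sigma_ge_aux (hn : 0 < n) :
    ∀ q (s : Setoid (Fin n)), IsNC s → (blocks s).card = q →
      n + 1 ≤ (blocks (cycleSetoid ((permOf s)⁻¹ * permOf (topS n)))).card + q := by
  intro q
  induction q using Nat.strong_induction_on with
  | _ q ih =>
    intro s hs hq
    rcases le_or_gt 2 q with h2 | h1
    · obtain ⟨s', a, b, hNC', hcard, hperm⟩ := exists_merge hn hs (hq ▸ h2)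
      have hPs : permOf s = permOf s' * Equiv.swap a b := by
        rw [hperm, mul_assoc, Equiv.swap_mul_self, mul_one]
      have hinv : (permOf s)⁻¹ * permOf (topS n)
          = Equiv.swap a b * ((permOf s')⁻¹ * permOf (topS n)) := by
        rw [hPs, mul_inv_rev, Equiv.swap_inv, mul_assoc]
      have hbound := card_blocks_cycleSetoid_swap_mul ((permOf s')⁻¹ * permOf (topS n)) a b
      have hih := ih ((blocks s').card) (by omega) s' hNC' rfl
      rw [hinv]
      omega
    · -- q ≤ 1, so s is the one-block partition
      have hq1 : q = 1 := by
        have : blk s ⟨0, hn⟩ ∈ blocks s := blk_mem_blocks s _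
        have : 0 < (blocks s).card := Finset.card_pos.2 ⟨_, this⟩
        omega
      subst hq1
      obtain ⟨C, hC⟩ := Finset.card_eq_one.1 hq
      have hblkC : ∀ x, blk s x = C := by
        intro x
        have := blk_mem_blocks s x
        rw [hC] at this
        simpa using this
      have hstop : s = topS n := by
        apply Setoid.ext
        intro x y
        constructor
        · intro _; trivial
        · intro _
          apply mem_blk.1
          rw [hblkC x, ← hblkC y]
          exact blk_self s y
      subst hstop
      rw [inv_mul_cancel]
      have hone : ∀ x : Fin n, blk (cycleSetoid (1 : Equiv.Perm (Fin n))) x = {x} := by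
        intro x
        ext z
        simp only [mem_blk, Finset.mem_singleton]
        rw [sameCycle_r]
        rw [Equiv.Perm.sameCycle_one]
        exact eq_comm
      have : blocks (cycleSetoid (1 : Equiv.Perm (Fin n))) =
          Finset.univ.image fun x : Fin n => ({x} : Finset (Fin n)) := by
        rw [blocks_eq_image]
        apply Finset.image_congr
        intro x _
        exact hone x
      rw [this, Finset.card_image_of_injective _ (fun x y h => Finset.singleton_injective h)]
      simp
end Aux4
section Aux5

open Finset

variable {n : ℕ}

lemma perm_eq_permOf_of_max (σ : Equiv.Perm (Fin n))
    (hmax : ∀ x, σ x ≤ x → ∀ z ∈ blk (cycleSetoid σ) x, z ≤ x) :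
    permOf (cycleSetoid σ) = σ := by
  apply Equiv.ext
  intro x
  rw [permOf_apply]
  set ρ := cycleSetoid σ with hρ
  set B := blk ρ x with hB
  have hBne : B.Nonempty := blk_nonempty ρ x
  have hσB : ∀ z ∈ B, σ z ∈ B := by
    intro z hz
    exact mem_blk.2 ((mem_blk.1 hz).trans (cycleSetoid_r_apply σ z))
  have hblkz : ∀ z ∈ B, blk ρ z = B := by
    intro z hz
    rw [hB]
    exact (blk_eq_of_r (mem_blk.1 hz)).symm
  have himg : B.image σ = B := by
    apply Finset.eq_of_subset_of_card_le
    · intro y hy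
      obtain ⟨z, hz, rfl⟩ := Finset.mem_image.1 hy
      exact hσB z hz
    · rw [Finset.card_image_of_injective _ σ.injective]
  set M := B.max' hBne with hM
  have hMB : M ∈ B := Finset.max'_mem _ _
  have hMmax : ∀ z ∈ B, z ≤ M := fun z hz => Finset.le_max' _ z hz
  have hlt : ∀ z ∈ B, z ≠ M → z < σ z := by
    intro z hz hne
    by_contra hc
    have h1 := hmax z (not_lt.1 hc)
    rw [hblkz z hz] at h1
    exact hne (le_antisymm (hMmax z hz) (h1 M hMB))
  set rk : Fin n → ℕ := fun z => (B.filter fun u => u ≤ z).card with hrk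
  have hrkmono : ∀ z1 z2, z2 ∈ B → z1 < z2 → rk z1 < rk z2 := by
    intro z1 z2 hz2 h12
    apply Finset.card_lt_card
    constructor
    · intro u hu
      have := Finset.mem_filter.1 hu
      exact Finset.mem_filter.2 ⟨this.1, le_trans this.2 (le_of_lt h12)⟩
    · intro hsub
      have : z2 ∈ B.filter fun u => u ≤ z1 :=
        hsub (Finset.mem_filter.2 ⟨hz2, le_refl _⟩)
      exact absurd ((Finset.mem_filter.1 this).2) (not_le.2 h12)
  have hrkpos : ∀ z ∈ B, 1 ≤ rk z := by
    intro z hz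
    exact Finset.card_pos.2 ⟨z, Finset.mem_filter.2 ⟨hz, le_refl _⟩⟩
  have hsum : ∑ z ∈ B, rk (σ z) = ∑ z ∈ B, rk z := by
    calc ∑ z ∈ B, rk (σ z) = ∑ y ∈ B.image σ, rk y :=
          (Finset.sum_image (fun a _ b _ h => σ.injective h)).symm
      _ = ∑ z ∈ B, rk z := by rw [himg]
  set T := B.erase M with hT
  have hMadd1 : rk (σ M) + ∑ z ∈ T, rk (σ z) = ∑ z ∈ B, rk (σ z) :=
    Finset.add_sum_erase B (fun z => rk (σ z)) hMB
  have hMadd2 : rk M + ∑ z ∈ T, rk z = ∑ z ∈ B, rk z :=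
    Finset.add_sum_erase B rk hMB
  have hpt : ∀ z ∈ T, rk z + 1 ≤ rk (σ z) := by
    intro z hz
    obtain ⟨hzne, hzB⟩ := Finset.mem_erase.1 hz
    exact hrkmono z (σ z) (hσB z hzB) (hlt z hzB hzne)
  have hTsum : ∑ z ∈ T, (rk z + 1) ≤ ∑ z ∈ T, rk (σ z) := Finset.sum_le_sum hpt
  have hTsum' : ∑ z ∈ T, (rk z + 1) = ∑ z ∈ T, rk z + T.card := by
    rw [Finset.sum_add_distrib, Finset.sum_const, smul_eq_mul, mul_one]
  have hrkM : rk M = B.card := by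
    have : B.filter (fun u => u ≤ M) = B := Finset.filter_true_of_mem hMmax
    rw [hrk]
    simp only [this]
  have hrkσM1 : 1 ≤ rk (σ M) := hrkpos _ (hσB M hMB)
  have hTcard : T.card + 1 = B.card := by
    rw [hT, Finset.card_erase_of_mem hMB]
    have : 0 < B.card := Finset.card_pos.2 hBne
    omega
  have hσMrk : rk (σ M) = 1 := by omega
  have hSeq : ∑ z ∈ T, (rk z + 1) = ∑ z ∈ T, rk (σ z) := by
    rw [hTsum']
    omega
  have hptEq : ∀ z ∈ T, rk z + 1 = rk (σ z) :=
    (Finset.sum_eq_sum_iff_of_le hpt).1 hSeq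
  by_cases hxM : x = M
  · apply nextFun_eq_of_isNext
    refine ⟨hσB x (blk_self ρ x), Or.inr ⟨?_, ?_⟩⟩
    · intro z hz
      rw [hxM]
      exact hMmax z hz
    · intro z hz
      by_contra hcz
      have h1 := hrkmono z (σ x) (hσB x (blk_self ρ x)) (not_le.1 hcz)
      have h2 := hrkpos z hz
      rw [hxM] at h1
      omega
  · have hxT : x ∈ T := Finset.mem_erase.2 ⟨hxM, blk_self ρ x⟩
    have hxB : x ∈ B := blk_self ρ x
    apply nextFun_eq_of_isNext
    refine ⟨hσB x hxB, Or.inl ⟨hlt x hxB hxM, ?_⟩⟩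
    intro z hz hxz
    by_contra hcz
    have h1 := hrkmono z (σ x) (hσB x hxB) (not_le.1 hcz)
    have h2 := hrkmono x z hz hxz
    have h3 := hptEq x hxT
    omega

lemma card_blocks_le_dfix (hn : 0 < n) (σ : Equiv.Perm (Fin n)) :
    (blocks (cycleSetoid σ)).card ≤ (Finset.univ.filter fun x => σ x ≤ x).card := by
  classical
  apply Finset.card_le_card_of_injOn
    (fun C => if h : C.Nonempty then C.max' h else ⟨0, hn⟩)
  · intro C hC
    obtain ⟨y, rfl⟩ := mem_blocks.1 hC
    have hne : (blk (cycleSetoid σ) y).Nonempty := blk_nonempty _ y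
    simp only [Finset.mem_coe, dif_pos hne]
    apply Finset.mem_filter.2
    refine ⟨Finset.mem_univ _, ?_⟩
    set M := (blk (cycleSetoid σ) y).max' hne with hM
    have hMB : M ∈ blk (cycleSetoid σ) y := Finset.max'_mem _ _
    have : σ M ∈ blk (cycleSetoid σ) y :=
      mem_blk.2 ((mem_blk.1 hMB).trans (cycleSetoid_r_apply σ M))
    exact Finset.le_max' _ _ this
  · intro C1 h1 C2 h2 hf
    obtain ⟨y1, rfl⟩ := mem_blocks.1 (Finset.mem_coe.1 h1)
    obtain ⟨y2, rfl⟩ := mem_blocks.1 (Finset.mem_coe.1 h2)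
    have hne1 : (blk (cycleSetoid σ) y1).Nonempty := blk_nonempty _ y1
    have hne2 : (blk (cycleSetoid σ) y2).Nonempty := blk_nonempty _ y2
    dsimp only at hf
    rw [dif_pos hne1, dif_pos hne2] at hf
    have hm1 := Finset.max'_mem _ hne1
    have hm2 := Finset.max'_mem _ hne2
    rw [hf] at hm1
    calc blk (cycleSetoid σ) y1
        = blk (cycleSetoid σ) ((blk (cycleSetoid σ) y2).max' hne2) :=
          blk_eq_of_r (mem_blk.1 hm1)
      _ = blk (cycleSetoid σ) y2 := (blk_eq_of_r (mem_blk.1 hm2)).symm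

theorem kreweras_permOf {s : Setoid (Fin n)} (hn : 0 < n) (hs : IsNC s) :
    permOf (kreweras s) = (permOf s)⁻¹ * permOf (topS n) := by
  set σ := (permOf s)⁻¹ * permOf (topS n) with hσ
  have hD := card_dfix hn s
  have hG := card_blocks_sigma_ge_aux hn (blocks s).card s hs rfl
  have hle := card_blocks_le_dfix hn σ
  rw [← hσ] at hD hG
  -- equality of cardinalities
  have hcardeq : (blocks (cycleSetoid σ)).card = (Finset.univ.filter fun x => σ x ≤ x).card := by
    omega
  have hinjOn : Set.InjOn (fun C : Finset (Fin n) => if h : C.Nonempty then C.max' h else ⟨0, hn⟩)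
      (blocks (cycleSetoid σ)) := by
    intro C1 h1 C2 h2 hf
    obtain ⟨y1, rfl⟩ := mem_blocks.1 (Finset.mem_coe.1 h1)
    obtain ⟨y2, rfl⟩ := mem_blocks.1 (Finset.mem_coe.1 h2)
    have hne1 : (blk (cycleSetoid σ) y1).Nonempty := blk_nonempty _ y1
    have hne2 : (blk (cycleSetoid σ) y2).Nonempty := blk_nonempty _ y2
    dsimp only at hf
    rw [dif_pos hne1, dif_pos hne2] at hf
    have hm1 := Finset.max'_mem _ hne1
    have hm2 := Finset.max'_mem _ hne2
    rw [hf] at hm1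
    calc blk (cycleSetoid σ) y1
        = blk (cycleSetoid σ) ((blk (cycleSetoid σ) y2).max' hne2) :=
          blk_eq_of_r (mem_blk.1 hm1)
      _ = blk (cycleSetoid σ) y2 := (blk_eq_of_r (mem_blk.1 hm2)).symm
  -- the image of block-maxima is exactly the descent set
  have himg : (blocks (cycleSetoid σ)).image
        (fun C => if h : C.Nonempty then C.max' h else ⟨0, hn⟩) =
      (Finset.univ.filter fun x => σ x ≤ x) := by
    apply Finset.eq_of_subset_of_card_le
    · intro y hy
      obtain ⟨C, hC, rfl⟩ := Finset.mem_image.1 hy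
      obtain ⟨z, rfl⟩ := mem_blocks.1 hC
      have hne : (blk (cycleSetoid σ) z).Nonempty := blk_nonempty _ z
      rw [dif_pos hne]
      apply Finset.mem_filter.2
      refine ⟨Finset.mem_univ _, ?_⟩
      have hMB := Finset.max'_mem _ hne
      have : σ ((blk (cycleSetoid σ) z).max' hne) ∈ blk (cycleSetoid σ) z :=
        mem_blk.2 ((mem_blk.1 hMB).trans (cycleSetoid_r_apply σ _))
      exact Finset.le_max' _ _ this
    · rw [Finset.card_image_of_injOn hinjOn, ← hcardeq]
  have hmax : ∀ x, σ x ≤ x → ∀ z ∈ blk (cycleSetoid σ) x, z ≤ x := by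
    intro x hx z hz
    have hxmem : x ∈ Finset.univ.filter fun x => σ x ≤ x :=
      Finset.mem_filter.2 ⟨Finset.mem_univ _, hx⟩
    rw [← himg] at hxmem
    obtain ⟨C, hC, hfC⟩ := Finset.mem_image.1 hxmem
    obtain ⟨y, rfl⟩ := mem_blocks.1 hC
    have hne : (blk (cycleSetoid σ) y).Nonempty := blk_nonempty _ y
    rw [dif_pos hne] at hfC
    have hxB : x ∈ blk (cycleSetoid σ) y := hfC ▸ Finset.max'_mem _ hne
    have hBx : blk (cycleSetoid σ) y = blk (cycleSetoid σ) x := blk_eq_of_r (mem_blk.1 hxB)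
    rw [← hBx] at hz
    exact hfC ▸ Finset.le_max' _ z hz
  exact perm_eq_permOf_of_max σ hmax

end Aux5
section Aux6

open Finset

variable {n : ℕ}

theorem kreweras_isNC {s : Setoid (Fin n)} (hn : 0 < n) (hs : IsNC s) :
    IsNC (kreweras s) := by
  intro p1 p2 p3 p4 h12 h23 h34 h13 h24
  by_contra hc
  set ρ := kreweras s with hρdef
  have hperm : permOf ρ = (permOf s)⁻¹ * permOf (topS n) := kreweras_permOf hn hs
  have hkey : ∀ u, nextFun s (nextFun ρ u) = permOf (topS n) u := by
    intro u
    have h0 : permOf s (permOf ρ u) = permOf (topS n) u := by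
      rw [hperm]
      simp [Equiv.Perm.mul_apply]
    rw [permOf_apply, permOf_apply] at h0
    exact h0
  -- a' : largest element of the block of p1 below p2
  have hne1 : ((blk ρ p1).filter fun u => u < p2).Nonempty :=
    ⟨p1, Finset.mem_filter.2 ⟨blk_self ρ p1, h12⟩⟩
  obtain ⟨a', ha'mem, ha'max'⟩ :
      ∃ a' ∈ (blk ρ p1).filter fun u => u < p2,
        ∀ u ∈ (blk ρ p1).filter fun u => u < p2, u ≤ a' :=
    ⟨_, Finset.max'_mem _ hne1, fun u hu => Finset.le_max' _ u hu⟩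
  have ha'B : a' ∈ blk ρ p1 := Finset.mem_of_mem_filter _ ha'mem
  have ha'p2 : a' < p2 := (Finset.mem_filter.1 ha'mem).2
  have ha'max : ∀ u ∈ blk ρ p1, u < p2 → u ≤ a' := fun u h1 h2 =>
    ha'max' u (Finset.mem_filter.2 ⟨h1, h2⟩)
  have hblka' : blk ρ a' = blk ρ p1 := (blk_eq_of_r (mem_blk.1 ha'B)).symm
  set c' := nextFun ρ a' with hc'def
  have hc'B : c' ∈ blk ρ p1 := by
    rw [← hblka']
    exact nextFun_mem_blk ρ a'
  have hp3a' : p3 ∈ blk ρ a' := by rw [hblka']; exact mem_blk.2 h13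
  have ha'p3 : a' < p3 := lt_trans ha'p2 h23
  obtain ⟨ha'c', hc'le⟩ :
      a' < c' ∧ ∀ z ∈ blk ρ a', a' < z → c' ≤ z := by
    rcases (isNext_nextFun ρ a').2 with ⟨h1, h2⟩ | ⟨hall, _⟩
    · exact ⟨h1, h2⟩
    · exact absurd (hall p3 hp3a') (not_le.2 ha'p3)
  have hc'p3 : c' ≤ p3 := hc'le p3 hp3a' ha'p3
  have hp2c' : p2 < c' := by
    rcases lt_trichotomy c' p2 with h | h | h
    · exact absurd ha'c' (not_lt.2 (ha'max c' hc'B h))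
    · exact absurd (mem_blk.1 (h ▸ hc'B)) hc
    · exact h
  -- b' : largest element of the block of p2 below c'
  have hne2 : ((blk ρ p2).filter fun u => u < c').Nonempty :=
    ⟨p2, Finset.mem_filter.2 ⟨blk_self ρ p2, hp2c'⟩⟩
  obtain ⟨b', hb'mem, hb'max'⟩ :
      ∃ b' ∈ (blk ρ p2).filter fun u => u < c',
        ∀ u ∈ (blk ρ p2).filter fun u => u < c', u ≤ b' :=
    ⟨_, Finset.max'_mem _ hne2, fun u hu => Finset.le_max' _ u hu⟩
  have hb'B : b' ∈ blk ρ p2 := Finset.mem_of_mem_filter _ hb'mem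
  have hb'c' : b' < c' := (Finset.mem_filter.1 hb'mem).2
  have hb'max : ∀ u ∈ blk ρ p2, u < c' → u ≤ b' := fun u h1 h2 =>
    hb'max' u (Finset.mem_filter.2 ⟨h1, h2⟩)
  have hp2b' : p2 ≤ b' := hb'max' p2 (Finset.mem_filter.2 ⟨blk_self ρ p2, hp2c'⟩)
  have hblkb' : blk ρ b' = blk ρ p2 := (blk_eq_of_r (mem_blk.1 hb'B)).symm
  set d' := nextFun ρ b' with hd'def
  have hd'B : d' ∈ blk ρ p2 := by
    rw [← hblkb']
    exact nextFun_mem_blk ρ b'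
  have hp4b' : p4 ∈ blk ρ b' := by rw [hblkb']; exact mem_blk.2 h24
  have hb'p4 : b' < p4 := lt_trans hb'c' (lt_of_le_of_lt hc'p3 h34)
  obtain ⟨hb'd', hd'le⟩ :
      b' < d' ∧ ∀ z ∈ blk ρ b', b' < z → d' ≤ z := by
    rcases (isNext_nextFun ρ b').2 with ⟨h1, h2⟩ | ⟨hall, _⟩
    · exact ⟨h1, h2⟩
    · exact absurd (hall p4 hp4b') (not_le.2 hb'p4)
  have hc'd' : c' < d' := by
    rcases lt_trichotomy d' c' with h | h | h
    · exact absurd hb'd' (not_lt.2 (hb'max d' hd'B h))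
    · exfalso
      apply hc
      have h1 : ρ.r p1 c' := mem_blk.1 hc'B
      have h2 : ρ.r p2 c' := mem_blk.1 (h ▸ hd'B)
      exact ρ.trans' h1 (ρ.symm' h2)
    · exact h
  -- move to the level of s
  have hkeyA : nextFun s c' = permOf (topS n) a' := hkey a'
  have hkeyB : nextFun s d' = permOf (topS n) b' := hkey b'
  obtain ⟨hacy, hcyp2⟩ := cy_gt ha'p2
  obtain ⟨hbcy, hcyc'⟩ := cy_gt hb'c'
  have hrc' : s.r c' (permOf (topS n) a') := by rw [← hkeyA]; exact r_nextFun s c'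
  have hrd' : s.r d' (permOf (topS n) b') := by rw [← hkeyB]; exact r_nextFun s d'
  have hlt' : nextFun s c' < c' := by
    rw [hkeyA]
    exact lt_of_le_of_lt hcyp2 (lt_of_le_of_lt hp2b' hb'c')
  have hall : ∀ z ∈ blk s c', z ≤ c' := by
    rcases (isNext_nextFun s c').2 with ⟨h1, _⟩ | ⟨hall, _⟩
    · exact absurd (lt_trans h1 hlt') (lt_irrefl _)
    · exact hall
  by_cases hbc : permOf (topS n) b' = c'
  · have : s.r c' d' := by
      rw [← hbc]
      exact s.symm' hrd'
    exact absurd (hall d' (mem_blk.2 this)) (not_le.2 hc'd')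
  · have hbc' : permOf (topS n) b' < c' := lt_of_le_of_ne hcyc' hbc
    have hab : permOf (topS n) a' < permOf (topS n) b' :=
      lt_of_le_of_lt hcyp2 (lt_of_le_of_lt hp2b' hbcy)
    have hr := hs _ _ _ _ hab hbc' hc'd' (s.symm' hrc') (s.symm' hrd')
    have : s.r c' d' := s.trans' (s.trans' hrc' hr) (s.symm' hrd')
    exact absurd (hall d' (mem_blk.2 this)) (not_le.2 hc'd')

lemma sameCycle_conj {g ρ : Equiv.Perm (Fin n)} {x y : Fin n} :
    (g⁻¹ * ρ * g).SameCycle x y ↔ ρ.SameCycle (g x) (g y) := by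
  have hpow : ∀ k : ℤ, (g⁻¹ * ρ * g) ^ k = g⁻¹ * ρ ^ k * g := by
    intro k
    rw [show g⁻¹ * ρ * g = g⁻¹ * ρ * (g⁻¹)⁻¹ by rw [inv_inv], conj_zpow, inv_inv]
  constructor
  · rintro ⟨k, hk⟩
    refine ⟨k, ?_⟩
    rw [hpow k] at hk
    have := congrArg g hk
    simpa [Equiv.Perm.mul_apply] using this
  · rintro ⟨k, hk⟩
    refine ⟨k, ?_⟩
    rw [hpow k]
    simp [Equiv.Perm.mul_apply, hk]

lemma blk_cycleSetoid_conj (g ρ : Equiv.Perm (Fin n)) (x : Fin n) :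
    blk (cycleSetoid (g⁻¹ * ρ * g)) x = (blk (cycleSetoid ρ) (g x)).image ⇑g⁻¹ := by
  ext z
  simp only [mem_blk, Finset.mem_image]
  constructor
  · intro h
    refine ⟨g z, ?_, by simp⟩
    exact sameCycle_conj.1 h
  · rintro ⟨u, hu, rfl⟩
    apply (sameCycle_conj (g := g)).2
    have hu' : ρ.SameCycle (g x) u := hu
    simpa using hu'

lemma blocks_cycleSetoid_conj (g ρ : Equiv.Perm (Fin n)) :
    blocks (cycleSetoid (g⁻¹ * ρ * g)) =
      (blocks (cycleSetoid ρ)).image (fun B => B.image ⇑g⁻¹) := by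
  ext C
  simp only [mem_blocks, Finset.mem_image]
  constructor
  · rintro ⟨x, rfl⟩
    exact ⟨blk (cycleSetoid ρ) (g x), ⟨g x, rfl⟩, (blk_cycleSetoid_conj g ρ x).symm⟩
  · rintro ⟨B, hB, rfl⟩
    obtain ⟨y, rfl⟩ := hB
    refine ⟨g⁻¹ y, ?_⟩
    rw [blk_cycleSetoid_conj g ρ (g⁻¹ y)]
    simp

lemma prod_card_blocks_conj {M : Type*} [CommMonoid M] (g ρ : Equiv.Perm (Fin n))
    (f : ℕ → M) :
    ∏ B ∈ blocks (cycleSetoid (g⁻¹ * ρ * g)), f B.card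
      = ∏ B ∈ blocks (cycleSetoid ρ), f B.card := by
  rw [blocks_cycleSetoid_conj, Finset.prod_image ?_]
  · apply Finset.prod_congr rfl
    intro B _
    rw [Finset.card_image_of_injective _ (Equiv.injective g⁻¹)]
  · intro B _ C _ h
    exact Finset.image_injective (Equiv.injective g⁻¹) h

lemma Yprod_eq_one_var (w : Fin n → Fin 1) (s : Setoid (Fin n)) :
    Yprod w s = ∏ B ∈ blocks s, Ygen ⟨B.card, fun _ => (0 : Fin 1)⟩ := by
  unfold Yprod
  apply Finset.prod_congr rfl
  intro B _
  congr 1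
  refine Sigma.ext rfl (heq_of_eq (funext fun i => Subsingleton.elim _ _))

lemma Yprod_kreweras_kreweras (hn : 0 < n) {s : Setoid (Fin n)} (hs : IsNC s)
    (w : Fin n → Fin 1) :
    Yprod w (kreweras (kreweras s)) = Yprod w s := by
  rw [Yprod_eq_one_var, Yprod_eq_one_var]
  have h2 : (permOf (kreweras s))⁻¹ * permOf (topS n)
      = (permOf (topS n))⁻¹ * permOf s * permOf (topS n) := by
    rw [kreweras_permOf hn hs]
    group
  have h3 : kreweras (kreweras s)
      = cycleSetoid ((permOf (topS n))⁻¹ * permOf s * permOf (topS n)) := by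
    show cycleSetoid ((permOf (kreweras s))⁻¹ * permOf (topS n)) = _
    rw [h2]
  rw [h3, prod_card_blocks_conj (permOf (topS n)) (permOf s)
    (fun m => Ygen ⟨m, fun _ => (0 : Fin 1)⟩), cycleSetoid_permOf]

end Aux6
/-- Lemma 7.1.  The Hopf algebra `Y^(1)` is cocommutative:
`F ∘ Δ = Δ` where `F` is the flip of the two tensor factors. -/
theorem Y1_cocommutative :
    (Algebra.TensorProduct.comm ℂ (Yalg 1) (Yalg 1)).toAlgHom.comp (Δk 1) = Δk 1 := by
  apply MvPolynomial.algHom_ext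
  intro q
  have hn : 0 < q.1.1 := lt_of_lt_of_le (by norm_num) q.2
  rw [AlgHom.comp_apply]
  have hΔ : Δk 1 (MvPolynomial.X q)
      = ∑ π : NC q.1.1, Yprod q.1.2 π.1 ⊗ₜ[ℂ] Yprod q.1.2 (kreweras π.1) :=
    MvPolynomial.aeval_X _ q
  rw [hΔ, map_sum]
  have hflip : ∀ π : NC q.1.1,
      (Algebra.TensorProduct.comm ℂ (Yalg 1) (Yalg 1)).toAlgHom
          (Yprod q.1.2 π.1 ⊗ₜ[ℂ] Yprod q.1.2 (kreweras π.1))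
        = Yprod q.1.2 (kreweras π.1) ⊗ₜ[ℂ] Yprod q.1.2 π.1 := by
    intro π
    simp [Algebra.TensorProduct.comm_tmul]
  rw [Finset.sum_congr rfl (fun π _ => hflip π)]
  -- reindex by the Kreweras bijection
  have hinj : Function.Injective
      (fun π : NC q.1.1 => (⟨kreweras π.1, kreweras_isNC hn π.2⟩ : NC q.1.1)) := by
    intro π π' h
    have h1 : kreweras π.1 = kreweras π'.1 := congrArg Subtype.val h
    have h2 : permOf (kreweras π.1) = permOf (kreweras π'.1) := by rw [h1]
    rw [kreweras_permOf hn π.2, kreweras_permOf hn π'.2] at h2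
    have h3 : permOf π.1 = permOf π'.1 := inv_injective (mul_right_cancel h2)
    apply Subtype.ext
    rw [← cycleSetoid_permOf π.1, ← cycleSetoid_permOf π'.1, h3]
  have hsum := Equiv.sum_comp
    (Equiv.ofBijective _ ((Finite.injective_iff_bijective).1 hinj))
    (fun π : NC q.1.1 => Yprod q.1.2 π.1 ⊗ₜ[ℂ] Yprod q.1.2 (kreweras π.1))
  rw [← hsum]
  apply Finset.sum_congr rfl
  intro π _
  show Yprod q.1.2 (kreweras π.1) ⊗ₜ[ℂ] Yprod q.1.2 π.1
      = Yprod q.1.2 (kreweras π.1) ⊗ₜ[ℂ] Yprod q.1.2 (kreweras (kreweras π.1))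
  rw [Yprod_kreweras_kreweras hn π.2]

end FreeProb

end
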